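/- (Mid-time proximity under modified slopes.) Assume hypothesis (H2), that Δx ≤ 1, and that sup_{k∈ℤ} ρ_k ≤ C for some C > 0. Then for every j ∈ ℤ, with the modified slopes, |ρ^{½,−}_{j+1/2} − ρ_j| ≤ K̃·(Δx)^δ and |ρ^{½,+}_{j−1/2} − ρ_j| ≤ K̃·(Δx)^δ, where K̃ := ((1 + λ·L)/2)·K + λ·M·C·(1 + θ)·(sup |μ'|)·m. -/

import Mathlib

open MeasureTheory

noncomputable section

/-- minmod limiter of four arguments. -/
def minmod4 (a b c d : ℝ) : ℝ :=
  if 0 < a ∧ 0 < b ∧ 0 < c ∧ 0 < d then min (min a b) (min c d)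
  else if a < 0 ∧ b < 0 ∧ c < 0 ∧ d < 0 then max (max a b) (max c d)
  else 0

/-- modified MUSCL slopes
`σ_j = 2θ·minmod(ρ_j − ρ_{j−1}, (ρ_{j+1} − ρ_{j−1})/2, ρ_{j+1} − ρ_j, sgn(ρ_{j+1} − ρ_j)·K·Δx^δ)`. -/
def slpM (θ K δ Δx : ℝ) (ρ : ℤ → ℝ) (j : ℤ) : ℝ :=
  2 * θ * minmod4 (ρ j - ρ (j - 1)) ((ρ (j + 1) - ρ (j - 1)) / 2) (ρ (j + 1) - ρ j)
    (Real.sign (ρ (j + 1) - ρ j) * K * Δx ^ δ)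

/-- left interface value `ρ⁻_{j+1/2} = ρ_j + σ_j/2` (modified slopes). -/
def intLM (θ K δ Δx : ℝ) (ρ : ℤ → ℝ) (j : ℤ) : ℝ := ρ j + slpM θ K δ Δx ρ j / 2

/-- right interface value `ρ⁺_{j−1/2} = ρ_j − σ_j/2` (modified slopes). -/
def intRM (θ K δ Δx : ℝ) (ρ : ℤ → ℝ) (j : ℤ) : ℝ := ρ j - slpM θ K δ Δx ρ j / 2

/-- discrete convolution `A_j = Δx·Σ_l μ((j−l)Δx)·ρ_l`. -/
def Adisc (μ : ℝ → ℝ) (Δx : ℝ) (ρ : ℤ → ℝ) (j : ℤ) : ℝ :=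
  Δx * ∑' l : ℤ, μ (((j : ℝ) - (l : ℝ)) * Δx) * ρ l

/-- `s_j = θ·(A_{j+1} − A_{j−1})`. -/
def sdisc (μ : ℝ → ℝ) (θ Δx : ℝ) (ρ : ℤ → ℝ) (j : ℤ) : ℝ :=
  θ * (Adisc μ Δx ρ (j + 1) - Adisc μ Δx ρ (j - 1))

/-- `A⁻_{j+1/2} = A_j + s_j/2`. -/
def AdiscL (μ : ℝ → ℝ) (θ Δx : ℝ) (ρ : ℤ → ℝ) (j : ℤ) : ℝ :=
  Adisc μ Δx ρ j + sdisc μ θ Δx ρ j / 2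

/-- `A⁺_{j−1/2} = A_j − s_j/2`. -/
def AdiscR (μ : ℝ → ℝ) (θ Δx : ℝ) (ρ : ℤ → ℝ) (j : ℤ) : ℝ :=
  Adisc μ Δx ρ j - sdisc μ θ Δx ρ j / 2

/-- mid-time value `ρ^{½,−}_{j+1/2}` (modified slopes). -/
def midLM (f : ℝ → ℝ → ℝ) (μ : ℝ → ℝ) (θ K δ lam Δx : ℝ) (ρ : ℤ → ℝ) (j : ℤ) : ℝ :=
  intLM θ K δ Δx ρ j - lam / 2 *
    (f (intLM θ K δ Δx ρ j) (AdiscL μ θ Δx ρ j) - f (intRM θ K δ Δx ρ j) (AdiscR μ θ Δx ρ j))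

/-- mid-time value `ρ^{½,+}_{j−1/2}` (modified slopes). -/
def midRM (f : ℝ → ℝ → ℝ) (μ : ℝ → ℝ) (θ K δ lam Δx : ℝ) (ρ : ℤ → ℝ) (j : ℤ) : ℝ :=
  intRM θ K δ Δx ρ j - lam / 2 *
    (f (intLM θ K δ Δx ρ j) (AdiscL μ θ Δx ρ j) - f (intRM θ K δ Δx ρ j) (AdiscR μ θ Δx ρ j))

/-- mid-time convolution `A^{½}_{j+1/2}` (modified slopes). -/
def AmidM (f : ℝ → ℝ → ℝ) (μ : ℝ → ℝ) (θ K δ lam Δx : ℝ) (ρ : ℤ → ℝ) (j : ℤ) : ℝ :=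
  Δx / 2 * ∑' l : ℤ,
    (μ (((j : ℝ) + 1 - (l : ℝ)) * Δx) * midRM f μ θ K δ lam Δx ρ l +
     μ (((j : ℝ) - (l : ℝ)) * Δx) * midLM f μ θ K δ lam Δx ρ l)

/-- Lax–Friedrichs type numerical flux `F(u,v,A)`. -/
def numFlux (f : ℝ → ℝ → ℝ) (α lam u v A : ℝ) : ℝ :=
  (f u A + f v A) / 2 - α * (v - u) / (2 * lam)

/-- MUSCL–Hancock update `ρ'_j` (modified slopes). -/
def mhUpdateM (f : ℝ → ℝ → ℝ) (μ : ℝ → ℝ) (θ K δ α lam Δx : ℝ) (ρ : ℤ → ℝ) (j : ℤ) : ℝ :=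
  ρ j - lam *
    (numFlux f α lam (midLM f μ θ K δ lam Δx ρ j) (midRM f μ θ K δ lam Δx ρ (j + 1))
        (AmidM f μ θ K δ lam Δx ρ j) -
     numFlux f α lam (midLM f μ θ K δ lam Δx ρ (j - 1)) (midRM f μ θ K δ lam Δx ρ j)
        (AmidM f μ θ K δ lam Δx ρ (j - 1)))

lemma abs_minmod4_le₁ (a b c d : ℝ) : |minmod4 a b c d| ≤ |a| := by
  unfold minmod4
  split_ifs with h1 h2
  · obtain ⟨ha, hb, hc, hd⟩ := h1
    have hpos : 0 < min (min a b) (min c d) := lt_min (lt_min ha hb) (lt_min hc hd)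
    rw [abs_of_pos hpos, abs_of_pos ha]
    exact le_trans (min_le_left _ _) (min_le_left _ _)
  · obtain ⟨ha, hb, hc, hd⟩ := h2
    have hneg : max (max a b) (max c d) < 0 := max_lt (max_lt ha hb) (max_lt hc hd)
    rw [abs_of_neg hneg, abs_of_neg ha]
    have : a ≤ max (max a b) (max c d) := le_trans (le_max_left _ _) (le_max_left _ _)
    linarith
  · simp [abs_nonneg]

lemma abs_minmod4_le₄ (a b c d : ℝ) : |minmod4 a b c d| ≤ |d| := by
  unfold minmod4
  split_ifs with h1 h2
  · obtain ⟨ha, hb, hc, hd⟩ := h1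
    have hpos : 0 < min (min a b) (min c d) := lt_min (lt_min ha hb) (lt_min hc hd)
    rw [abs_of_pos hpos, abs_of_pos hd]
    exact le_trans (min_le_right _ _) (min_le_right _ _)
  · obtain ⟨ha, hb, hc, hd⟩ := h2
    have hneg : max (max a b) (max c d) < 0 := max_lt (max_lt ha hb) (max_lt hc hd)
    rw [abs_of_neg hneg, abs_of_neg hd]
    have : d ≤ max (max a b) (max c d) := le_trans (le_max_right _ _) (le_max_right _ _)
    linarith
  · simp [abs_nonneg]

lemma abs_real_sign_le_one (x : ℝ) : |Real.sign x| ≤ 1 := by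
  unfold Real.sign; split_ifs <;> norm_num

/-- mid-time proximity under the modified slopes. -/
theorem stmt17 (f : ℝ → ℝ → ℝ) (μ : ℝ → ℝ) (Δx Δt lam θ K δ L M Cμ' C : ℝ)
    (hΔx : 0 < Δx) (hΔt : 0 < Δt) (hlam : lam = Δt / Δx)
    (hΔx1 : Δx ≤ 1)
    (hθ0 : 0 ≤ θ) (hθ1 : θ ≤ 1 / 2) (hK : 0 < K) (hδ0 : 0 < δ) (hδ1 : δ < 1)
    (hf : ContDiff ℝ 2 (Function.uncurry f)) (hf0 : ∀ A : ℝ, f 0 A = 0)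
    (hL : ∀ r A : ℝ, |deriv (fun x => f x A) r| ≤ L)
    (hM : 0 < M) (hdA : ∀ r a : ℝ, |deriv (f r) a| ≤ M * |r|)
    (hdAA : ∀ r a : ℝ, |iteratedDeriv 2 (f r) a| ≤ M * |r|)
    (hμ : ContDiff ℝ 2 μ) (hμc : HasCompactSupport μ)
    (hCμ' : ∀ x : ℝ, |deriv μ x| ≤ Cμ')
    (ρ : ℤ → ℝ) (hρ : ∀ j : ℤ, 0 ≤ ρ j) (hsum : Summable ρ)
    (hC : 0 < C) (hbd : ∀ k : ℤ, ρ k ≤ C) (j : ℤ) :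
    |midLM f μ θ K δ lam Δx ρ j - ρ j| ≤
      ((1 + lam * L) / 2 * K + lam * M * C * (1 + θ) * Cμ' * (Δx * ∑' l : ℤ, ρ l)) *
        Δx ^ δ ∧
    |midRM f μ θ K δ lam Δx ρ j - ρ j| ≤
      ((1 + lam * L) / 2 * K + lam * M * C * (1 + θ) * Cμ' * (Δx * ∑' l : ℤ, ρ l)) *
        Δx ^ δ := by
  set X := Δx ^ δ with hXdef
  set m := Δx * ∑' l : ℤ, ρ l with hmdef
  have hX0 : 0 < X := Real.rpow_pos_of_pos hΔx δ
  have hΔxX : Δx ≤ X := by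
    have := Real.rpow_le_rpow_of_exponent_ge hΔx hΔx1 hδ1.le
    simpa [Real.rpow_one, ← hXdef] using this
  have hlam0 : 0 ≤ lam := by rw [hlam]; positivity
  have hL0 : 0 ≤ L := le_trans (abs_nonneg _) (hL 0 0)
  have hCμ0 : 0 ≤ Cμ' := le_trans (abs_nonneg _) (hCμ' 0)
  have htsum0 : 0 ≤ ∑' l : ℤ, ρ l := tsum_nonneg hρ
  have hm0 : 0 ≤ m := by rw [hmdef]; exact mul_nonneg hΔx.le htsum0
  -- differentiability facts
  have hdiff : Differentiable ℝ (Function.uncurry f) := hf.differentiable (by norm_num)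
  have hd1 : ∀ A : ℝ, Differentiable ℝ (fun x => f x A) := fun A x =>
    by exact (hdiff (x, A)).comp x (DifferentiableAt.prodMk (𝕜 := ℝ) (x := x) differentiableAt_id (differentiableAt_const A))
  have hd2 : ∀ r : ℝ, Differentiable ℝ (f r) := fun r a =>
    by exact (hdiff (r, a)).comp a (DifferentiableAt.prodMk (𝕜 := ℝ) (x := a) (differentiableAt_const r) differentiableAt_id)
  have hμd : Differentiable ℝ μ := hμ.differentiable (by norm_num)
  -- Lipschitz estimates via the mean value inequality
  have hlip1 : ∀ u v A : ℝ, |f u A - f v A| ≤ L * |u - v| := by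
    intro u v A
    have := convex_univ.norm_image_sub_le_of_norm_deriv_le (fun x _ => (hd1 A) x)
      (fun x _ => by simpa [Real.norm_eq_abs] using hL x A) (Set.mem_univ v) (Set.mem_univ u)
    simpa [Real.norm_eq_abs] using this
  have hlip2 : ∀ r A B : ℝ, |f r A - f r B| ≤ M * |r| * |A - B| := by
    intro r A B
    have := convex_univ.norm_image_sub_le_of_norm_deriv_le (fun x _ => (hd2 r) x)
      (fun x _ => by simpa [Real.norm_eq_abs] using hdA r x) (Set.mem_univ B) (Set.mem_univ A)
    simpa [Real.norm_eq_abs] using this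
  have hlipμ : ∀ x y : ℝ, |μ x - μ y| ≤ Cμ' * |x - y| := by
    intro x y
    have := convex_univ.norm_image_sub_le_of_norm_deriv_le (fun z _ => hμd z)
      (fun z _ => by simpa [Real.norm_eq_abs] using hCμ' z) (Set.mem_univ y) (Set.mem_univ x)
    simpa [Real.norm_eq_abs] using this
  -- summability of the convolution terms
  obtain ⟨Bμ, hBμ⟩ := hμc.exists_bound_of_continuous hμ.continuous
  have hsummul : ∀ j' : ℤ, Summable (fun l : ℤ => μ (((j' : ℝ) - (l : ℝ)) * Δx) * ρ l) := by
    intro j'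
    apply Summable.of_norm
    refine Summable.of_nonneg_of_le (fun l => norm_nonneg _) (fun l => ?_) (hsum.mul_left Bμ)
    rw [Real.norm_eq_abs, abs_mul, abs_of_nonneg (hρ l)]
    exact mul_le_mul_of_nonneg_right (by simpa [Real.norm_eq_abs] using hBμ _) (hρ l)
  -- bound on the difference of discrete convolutions
  have hAdiff : ∀ j' : ℤ, |Adisc μ Δx ρ (j' + 1) - Adisc μ Δx ρ (j' - 1)| ≤ 2 * Cμ' * Δx * m := by
    intro j'
    set F : ℤ → ℝ := fun l =>
      μ ((((j' + 1 : ℤ) : ℝ) - (l : ℝ)) * Δx) - μ ((((j' - 1 : ℤ) : ℝ) - (l : ℝ)) * Δx) with hF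
    have key : Adisc μ Δx ρ (j' + 1) - Adisc μ Δx ρ (j' - 1) = Δx * ∑' l : ℤ, F l * ρ l := by
      unfold Adisc
      rw [← mul_sub, ← Summable.tsum_sub (hsummul (j' + 1)) (hsummul (j' - 1))]
      congr 1
      exact tsum_congr fun l => by rw [hF]; ring
    have hterm : ∀ l : ℤ, ‖F l * ρ l‖ ≤ (Cμ' * (2 * Δx)) * ρ l := by
      intro l
      rw [Real.norm_eq_abs, abs_mul, abs_of_nonneg (hρ l)]
      refine mul_le_mul_of_nonneg_right ?_ (hρ l)
      have h := hlipμ ((((j' + 1 : ℤ) : ℝ) - (l : ℝ)) * Δx) ((((j' - 1 : ℤ) : ℝ) - (l : ℝ)) * Δx)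
      have heq : (((j' + 1 : ℤ) : ℝ) - (l : ℝ)) * Δx - (((j' - 1 : ℤ) : ℝ) - (l : ℝ)) * Δx
          = 2 * Δx := by push_cast; ring
      have h2 : |(2 : ℝ) * Δx| = 2 * Δx := abs_of_nonneg (by positivity)
      rw [heq, h2] at h
      exact h
    have hgsum : Summable (fun l : ℤ => F l * ρ l) := by
      have := (hsummul (j' + 1)).sub (hsummul (j' - 1))
      simpa [hF, sub_mul] using this
    have hnsum : Summable (fun l : ℤ => ‖F l * ρ l‖) :=
      Summable.of_nonneg_of_le (fun l => norm_nonneg _) hterm (hsum.mul_left _)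
    rw [key, abs_mul, abs_of_pos hΔx]
    calc Δx * |∑' l : ℤ, F l * ρ l| ≤ Δx * ∑' l : ℤ, ‖F l * ρ l‖ :=
          mul_le_mul_of_nonneg_left (norm_tsum_le_tsum_norm hnsum) hΔx.le
      _ ≤ Δx * ∑' l : ℤ, (Cμ' * (2 * Δx)) * ρ l :=
          mul_le_mul_of_nonneg_left (Summable.tsum_le_tsum hterm hnsum (hsum.mul_left _)) hΔx.le
      _ = 2 * Cμ' * Δx * m := by rw [tsum_mul_left, hmdef]; ring
  -- slope bounds
  have habsC : |ρ j - ρ (j - 1)| ≤ C :=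
    abs_le.mpr ⟨by linarith [hρ j, hbd (j - 1)], by linarith [hρ (j - 1), hbd j]⟩
  have h2θ : 0 ≤ 2 * θ := by linarith
  have hσ1 : |slpM θ K δ Δx ρ j| ≤ 2 * θ * (K * X) := by
    unfold slpM
    rw [abs_mul, abs_of_nonneg h2θ]
    refine mul_le_mul_of_nonneg_left ?_ h2θ
    calc |minmod4 (ρ j - ρ (j - 1)) ((ρ (j + 1) - ρ (j - 1)) / 2) (ρ (j + 1) - ρ j)
            (Real.sign (ρ (j + 1) - ρ j) * K * Δx ^ δ)|
        ≤ |Real.sign (ρ (j + 1) - ρ j) * K * Δx ^ δ| := abs_minmod4_le₄ _ _ _ _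
      _ = |Real.sign (ρ (j + 1) - ρ j)| * (K * X) := by
          rw [abs_mul, abs_mul, abs_of_pos hK, abs_of_pos hX0, mul_assoc]
      _ ≤ 1 * (K * X) :=
          mul_le_mul_of_nonneg_right (abs_real_sign_le_one _) (by positivity)
      _ = K * X := one_mul _
  have hσ2 : |slpM θ K δ Δx ρ j| ≤ 2 * θ * C := by
    unfold slpM
    rw [abs_mul, abs_of_nonneg h2θ]
    exact mul_le_mul_of_nonneg_left (le_trans (abs_minmod4_le₁ _ _ _ _) habsC) h2θ
  -- interface / convolution identities
  have huv : intLM θ K δ Δx ρ j - intRM θ K δ Δx ρ j = slpM θ K δ Δx ρ j := by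
    unfold intLM intRM; ring
  have hab : AdiscL μ θ Δx ρ j - AdiscR μ θ Δx ρ j = sdisc μ θ Δx ρ j := by
    unfold AdiscL AdiscR; ring
  have hsb : |sdisc μ θ Δx ρ j| ≤ θ * (2 * Cμ' * Δx * m) := by
    unfold sdisc
    rw [abs_mul, abs_of_nonneg hθ0]
    exact mul_le_mul_of_nonneg_left (hAdiff j) hθ0
  have hvb : |intRM θ K δ Δx ρ j| ≤ (1 + θ) * C := by
    unfold intRM
    have h1 : |ρ j - slpM θ K δ Δx ρ j / 2| ≤ |ρ j| + |slpM θ K δ Δx ρ j| / 2 := by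
      have := abs_sub (ρ j) (slpM θ K δ Δx ρ j / 2)
      rw [abs_div, abs_two] at this
      linarith
    have h2 : |ρ j| ≤ C := abs_le.mpr ⟨by linarith [hρ j, hC], hbd j⟩
    nlinarith [hσ2]
  -- flux difference bound
  have hDb : |f (intLM θ K δ Δx ρ j) (AdiscL μ θ Δx ρ j) - f (intRM θ K δ Δx ρ j) (AdiscR μ θ Δx ρ j)|
      ≤ L * |slpM θ K δ Δx ρ j| + M * |intRM θ K δ Δx ρ j| * |sdisc μ θ Δx ρ j| := by
    have t1 := hlip1 (intLM θ K δ Δx ρ j) (intRM θ K δ Δx ρ j) (AdiscL μ θ Δx ρ j)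
    have t2 := hlip2 (intRM θ K δ Δx ρ j) (AdiscL μ θ Δx ρ j) (AdiscR μ θ Δx ρ j)
    rw [huv] at t1
    rw [hab] at t2
    calc |f (intLM θ K δ Δx ρ j) (AdiscL μ θ Δx ρ j) - f (intRM θ K δ Δx ρ j) (AdiscR μ θ Δx ρ j)|
        = |(f (intLM θ K δ Δx ρ j) (AdiscL μ θ Δx ρ j) - f (intRM θ K δ Δx ρ j) (AdiscL μ θ Δx ρ j))
            + (f (intRM θ K δ Δx ρ j) (AdiscL μ θ Δx ρ j) - f (intRM θ K δ Δx ρ j) (AdiscR μ θ Δx ρ j))| := by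
          ring_nf
      _ ≤ _ := (abs_add_le _ _).trans (add_le_add t1 t2)
  -- core estimate
  have hθΔ : θ * Δx ≤ X := le_trans (by nlinarith) hΔxX
  have hP : 0 ≤ lam * M * (1 + θ) * C * Cμ' * m :=
    mul_nonneg (mul_nonneg (mul_nonneg (mul_nonneg (mul_nonneg hlam0 hM.le) (by linarith)) hC.le) hCμ0) hm0
  have hcore : |slpM θ K δ Δx ρ j| / 2 + lam / 2 *
      |f (intLM θ K δ Δx ρ j) (AdiscL μ θ Δx ρ j) - f (intRM θ K δ Δx ρ j) (AdiscR μ θ Δx ρ j)|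
      ≤ ((1 + lam * L) / 2 * K + lam * M * C * (1 + θ) * Cμ' * m) * X := by
    have e1 : |slpM θ K δ Δx ρ j| ≤ K * X := by nlinarith [hσ1, mul_pos hK hX0]
    have eσ2 : |slpM θ K δ Δx ρ j| / 2 ≤ K * X / 2 := by linarith
    have i1 : L * |slpM θ K δ Δx ρ j| ≤ L * (K * X) := mul_le_mul_of_nonneg_left e1 hL0
    have i2 : M * |intRM θ K δ Δx ρ j| * |sdisc μ θ Δx ρ j|
        ≤ M * (((1 + θ) * C) * (θ * (2 * Cμ' * Δx * m))) := by
      rw [mul_assoc]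
      refine mul_le_mul_of_nonneg_left ?_ hM.le
      exact mul_le_mul hvb hsb (abs_nonneg _) (mul_nonneg (by linarith) hC.le)
    have e2 : lam / 2 * |f (intLM θ K δ Δx ρ j) (AdiscL μ θ Δx ρ j)
          - f (intRM θ K δ Δx ρ j) (AdiscR μ θ Δx ρ j)|
        ≤ lam / 2 * (L * (K * X) + M * (((1 + θ) * C) * (θ * (2 * Cμ' * Δx * m)))) := by
      refine mul_le_mul_of_nonneg_left (le_trans hDb ?_) (by linarith)
      linarith
    have e3 : lam / 2 * (L * (K * X) + M * (((1 + θ) * C) * (θ * (2 * Cμ' * Δx * m))))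
        = lam / 2 * (L * (K * X)) + (lam * M * (1 + θ) * C * Cμ' * m) * (θ * Δx) := by ring
    have e4 : (lam * M * (1 + θ) * C * Cμ' * m) * (θ * Δx)
        ≤ (lam * M * (1 + θ) * C * Cμ' * m) * X := mul_le_mul_of_nonneg_left hθΔ hP
    calc |slpM θ K δ Δx ρ j| / 2 + lam / 2 *
        |f (intLM θ K δ Δx ρ j) (AdiscL μ θ Δx ρ j) - f (intRM θ K δ Δx ρ j) (AdiscR μ θ Δx ρ j)|
        ≤ K * X / 2 + (lam / 2 * (L * (K * X)) + (lam * M * (1 + θ) * C * Cμ' * m) * X) := by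
          rw [e3] at e2; linarith [e4]
      _ = ((1 + lam * L) / 2 * K + lam * M * C * (1 + θ) * Cμ' * m) * X := by ring
  -- conclude
  have hmid1 : midLM f μ θ K δ lam Δx ρ j - ρ j = slpM θ K δ Δx ρ j / 2 - lam / 2 *
      (f (intLM θ K δ Δx ρ j) (AdiscL μ θ Δx ρ j) - f (intRM θ K δ Δx ρ j) (AdiscR μ θ Δx ρ j)) := by
    unfold midLM intLM; ring
  have hmid2 : midRM f μ θ K δ lam Δx ρ j - ρ j = -(slpM θ K δ Δx ρ j / 2) - lam / 2 *
      (f (intLM θ K δ Δx ρ j) (AdiscL μ θ Δx ρ j) - f (intRM θ K δ Δx ρ j) (AdiscR μ θ Δx ρ j)) := by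
    unfold midRM intRM; ring
  have habsσ2 : |slpM θ K δ Δx ρ j / 2| = |slpM θ K δ Δx ρ j| / 2 := by
    rw [abs_div, abs_two]
  have habslam : ∀ y : ℝ, |lam / 2 * y| = lam / 2 * |y| := fun y => by
    rw [abs_mul, abs_of_nonneg (by linarith)]
  constructor
  · rw [hmid1]
    refine le_trans (le_trans (abs_sub _ _) ?_) hcore
    rw [habsσ2, habslam]
  · rw [hmid2]
    refine le_trans (le_trans (abs_sub _ _) ?_) hcore
    rw [abs_neg, habsσ2, habslam]
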